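/- Let Λ be a finite-dimensional F-algebra and φ an algebra automorphism of Λ. The twisted trivial extension Triv_φ(Λ) = Λ ⋉ (_φ Λ*) is a Frobenius algebra: the bilinear form ((a,f),(b,g)) = f(b) + g(φ(a)) is nondegenerate and associative, and satisfies (x,y) = (y,α(x)) for the automorphism α((a,f)) = (φ(a), f∘φ⁻¹). In particular α is a Nakayama automorphism of Triv_φ(Λ). -/

import Mathlib

/-- The twisted trivial extension `Triv_φ(Λ) = Λ ⋉ (_φΛ*)` of a finite-dimensional
`F`-algebra `Λ` by an automorphism `φ`, with multiplication
`(a,f)(b,g) = (ab, f·b + φ(a)·g)` (where `(f·b)(x) = f(bx)` and `(φ(a)·g)(x) = g(x·φ(a))`),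
is a Frobenius algebra: the bilinear form `((a,f),(b,g)) = f(b) + g(φ(a))` is
nondegenerate, associative, and satisfies `(x,y) = (y, α(x))` for the (Nakayama)
automorphism `α((a,f)) = (φ(a), f ∘ φ⁻¹)`. -/
theorem stmt_1 (F : Type) [Field F] (Λ : Type) [Ring Λ] [Algebra F Λ]
    [FiniteDimensional F Λ] (φ : Λ ≃ₐ[F] Λ) :
    ∀ mul : (Λ × (Λ →ₗ[F] F)) → (Λ × (Λ →ₗ[F] F)) → (Λ × (Λ →ₗ[F] F)),
      (mul = fun p q => (p.1 * q.1,
          p.2.comp (LinearMap.mulLeft F q.1) + q.2.comp (LinearMap.mulRight F (φ p.1)))) →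
    ∀ B : (Λ × (Λ →ₗ[F] F)) → (Λ × (Λ →ₗ[F] F)) → F,
      (B = fun p q => p.2 q.1 + q.2 (φ p.1)) →
    ∀ α : (Λ × (Λ →ₗ[F] F)) → (Λ × (Λ →ₗ[F] F)),
      (α = fun p => (φ p.1, p.2.comp φ.symm.toLinearMap)) →
      -- B is bilinear
      (∀ x x' y, B (x + x') y = B x y + B x' y) ∧
      (∀ x y y', B x (y + y') = B x y + B x y') ∧
      (∀ (c : F) (x y), B (c • x) y = c * B x y) ∧
      (∀ (c : F) (x y), B x (c • y) = c * B x y) ∧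
      -- B is nondegenerate
      (∀ x, (∀ y, B x y = 0) → x = 0) ∧
      (∀ x, (∀ y, B y x = 0) → x = 0) ∧
      -- B is associative
      (∀ x y z, B (mul x y) z = B x (mul y z)) ∧
      -- α is a Nakayama automorphism: (x,y) = (y, α(x))
      (∀ x y, B x y = B y (α x)) ∧
      -- α is an algebra automorphism
      Function.Bijective α ∧
      (∀ x y, α (x + y) = α x + α y) ∧
      (∀ (c : F) (x), α (c • x) = c • α x) ∧
      (∀ x y, α (mul x y) = mul (α x) (α y)) := by
  intro mul hmul B hB α hα
  subst hmul hB hα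
  refine ⟨?_, ?_, ?_, ?_, ?_, ?_, ?_, ?_, ?_, ?_, ?_, ?_⟩
  · intro x x' y; simp [Prod.fst_add, Prod.snd_add]; ring
  · intro x y y'; simp [Prod.fst_add, Prod.snd_add]; ring
  · intro c x y; simp [Prod.smul_fst, Prod.smul_snd, smul_eq_mul]; ring
  · intro c x y; simp [Prod.smul_fst, Prod.smul_snd, smul_eq_mul]; ring
  · intro x hx
    have h1 : x.2 = 0 := by
      ext b
      have := hx (b, 0)
      simpa using this
    have h2 : φ x.1 = 0 := by
      rw [← Module.forall_dual_apply_eq_zero_iff F]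
      intro g
      have := hx (0, g)
      simpa [h1] using this
    have h3 : x.1 = 0 := by
      have := congrArg φ.symm h2
      simpa using this
    exact Prod.ext h3 h1
  · intro x hx
    have h1 : x.2 = 0 := by
      ext b
      have := hx (φ.symm b, 0)
      simpa using this
    have h2 : x.1 = 0 := by
      rw [← Module.forall_dual_apply_eq_zero_iff F]
      intro g
      have := hx (0, g)
      simpa [h1] using this
    exact Prod.ext h2 h1
  · intro x y z
    simp [LinearMap.mulLeft_apply, LinearMap.mulRight_apply, map_mul, mul_assoc]
    ring
  · intro x y
    simp
    ring
  · constructor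
    · intro x y h
      have h1 := congrArg Prod.fst h
      have h2 := congrArg Prod.snd h
      simp at h1 h2
      have h1' : x.1 = y.1 := h1
      have h2' : x.2 = y.2 := by
        ext b
        have := congrFun (congrArg (fun f : Λ →ₗ[F] F => f.toFun) h2) b
        simpa using this
      exact Prod.ext h1' h2'
    · intro y
      refine ⟨(φ.symm y.1, y.2.comp φ.toLinearMap), ?_⟩
      refine Prod.ext (by simp) ?_
      ext b; simp
  · intro x y
    refine Prod.ext (by simp) ?_
    ext b; simp
  · intro c x
    refine Prod.ext (by simp) ?_
    ext b; simp
  · intro x y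
    refine Prod.ext (by simp [map_mul]) ?_
    ext b
    simp [LinearMap.mulLeft_apply, LinearMap.mulRight_apply, map_mul]
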